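/- arXiv:math/9907183 — 6 statements merged into one kernel-verified Lean document; each statement's English description precedes it below -/
import Mathlib

section
/- The map π ↦ α(π), sending a partition to the partition of its angle lengths α_i = π_i + π'_i − 2i + 1, is a bijection between the set of partitions of n all of whose successive ranks lie in {0,1} and the set of partitions of n whose successive parts differ by at least 2. -/
/-- The conjugate partition: `conj π i = #{j ≥ 1 : π j ≥ i}`. -/
noncomputable def conj (π : ℕ → ℕ) (i : ℕ) : ℕ := {j : ℕ | 1 ≤ j ∧ i ≤ π j}.ncard

/-- A partition, as a function from part indices (starting at 1) to part sizes:
nonincreasing on indices ≥ 1, eventually zero, with the unused index 0 set to 0. -/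
def IsPartition (π : ℕ → ℕ) : Prop :=
  π 0 = 0 ∧ (∀ i j, 1 ≤ i → i ≤ j → π j ≤ π i) ∧ ∃ N, ∀ j, N ≤ j → π j = 0

/-- The number partitioned, i.e. the sum of all parts. -/
noncomputable def size (π : ℕ → ℕ) : ℕ := ∑' j, π j

/-- The Durfee square size: the largest `d` with `π d ≥ d`. -/
noncomputable def durfee (π : ℕ → ℕ) : ℕ := sSup {d : ℕ | d ≤ π d}

/-- The number of parts. -/
noncomputable def len (π : ℕ → ℕ) : ℕ := conj π 1

/-- The `i`-th successive rank `r_i = π_i - π'_i`. -/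
noncomputable def rank (π : ℕ → ℕ) (i : ℕ) : ℤ := (π i : ℤ) - (conj π i : ℤ)

/-- The `i`-th angle (hook) length `α_i = π_i + π'_i - 2 i + 1`, as an integer. -/
noncomputable def ang (π : ℕ → ℕ) (i : ℕ) : ℤ := (π i : ℤ) + (conj π i : ℤ) - 2 * i + 1

/-- The partition `α(π)` of angle lengths: `α_i = π_i + π'_i - 2 i + 1` for `1 ≤ i ≤ d(π)`,
and `0` outside that range. -/
noncomputable def angPart (π : ℕ → ℕ) (i : ℕ) : ℕ :=
  if 1 ≤ i ∧ i ≤ durfee π then π i + conj π i + 1 - 2 * i else 0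

lemma ncard_Icc' (a b : ℕ) : (Set.Icc a b).ncard = b + 1 - a := by
  rw [← Finset.coe_Icc, Set.ncard_coe_finset, Nat.card_Icc]

lemma ncard_Ico' (a b : ℕ) : (Set.Ico a b).ncard = b - a := by
  rw [← Finset.coe_Ico, Set.ncard_coe_finset, Nat.card_Ico]

lemma key_set_eq {π : ℕ → ℕ} (h : IsPartition π) {k : ℕ} (hk : 1 ≤ k) :
    {j : ℕ | 1 ≤ j ∧ k ≤ π j} = Set.Icc 1 (conj π k) := by
  obtain ⟨N, hN⟩ := h.2.2
  set S : Set ℕ := {j : ℕ | 1 ≤ j ∧ k ≤ π j} with hS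
  have hsub : S ⊆ Set.Ico 1 N := by
    intro j hj
    refine ⟨hj.1, ?_⟩
    by_contra hc
    push_neg at hc
    have := hN j hc
    have := hj.2
    omega
  have hfin : S.Finite := (Set.finite_Ico 1 N).subset hsub
  have hdc : ∀ j j', j ∈ S → 1 ≤ j' → j' ≤ j → j' ∈ S := by
    intro j j' hj hj' hle
    exact ⟨hj', le_trans hj.2 (h.2.1 _ _ hj' hle)⟩
  have hmem : ∀ j, 1 ≤ j → (j ∈ S ↔ j ≤ S.ncard) := by
    intro j hj
    constructor
    · intro hjS
      have hsub2 : Set.Icc 1 j ⊆ S := fun x hx => hdc j x hjS hx.1 hx.2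
      have h2 := Set.ncard_le_ncard hsub2 hfin
      rw [ncard_Icc'] at h2
      omega
    · intro hle
      by_contra hjS
      have hsub2 : S ⊆ Set.Ico 1 j := by
        intro x hx
        refine ⟨hx.1, ?_⟩
        by_contra hc
        push_neg at hc
        exact hjS (hdc x j hx hj hc)
      have h2 := Set.ncard_le_ncard hsub2 (Set.finite_Ico 1 j)
      rw [ncard_Ico'] at h2
      omega
  have hconj : conj π k = S.ncard := rfl
  ext j
  rcases Nat.eq_zero_or_pos j with h0 | h1
  · subst h0
    simp [hS, Set.mem_Icc]
  · rw [Set.mem_Icc, hconj]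
    have := hmem j h1
    constructor
    · intro hj; exact ⟨h1, (this.1 hj)⟩
    · intro hj; exact this.2 hj.2

lemma le_conj_iff {π : ℕ → ℕ} (h : IsPartition π) {i k : ℕ} (hi : 1 ≤ i) (hk : 1 ≤ k) :
    i ≤ conj π k ↔ k ≤ π i := by
  have h1 := key_set_eq h hk
  constructor
  · intro hle
    have : i ∈ Set.Icc 1 (conj π k) := ⟨hi, hle⟩
    rw [← h1] at this
    exact this.2
  · intro hle
    have : i ∈ {j : ℕ | 1 ≤ j ∧ k ≤ π j} := ⟨hi, hle⟩
    rw [h1] at this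
    exact this.2

lemma durfee_mem {π : ℕ → ℕ} (h : IsPartition π) : durfee π ≤ π (durfee π) := by
  obtain ⟨N, hN⟩ := h.2.2
  have hbdd : BddAbove {d : ℕ | d ≤ π d} := by
    refine ⟨N, fun d hd => ?_⟩
    by_contra hc
    push_neg at hc
    have := hN d (le_of_lt hc)
    simp only [Set.mem_setOf_eq] at hd
    omega
  have hne : {d : ℕ | d ≤ π d}.Nonempty := ⟨0, by simp⟩
  exact Nat.sSup_mem hne hbdd

lemma le_durfee {π : ℕ → ℕ} (h : IsPartition π) {d : ℕ} (hd : d ≤ π d) : d ≤ durfee π := by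
  obtain ⟨N, hN⟩ := h.2.2
  have hbdd : BddAbove {d : ℕ | d ≤ π d} := by
    refine ⟨N, fun d hd => ?_⟩
    by_contra hc
    push_neg at hc
    have := hN d (le_of_lt hc)
    simp only [Set.mem_setOf_eq] at hd
    omega
  exact le_csSup hbdd hd

lemma part_le_durfee {π : ℕ → ℕ} (h : IsPartition π) {j : ℕ} (hj : durfee π < j) :
    π j ≤ durfee π := by
  have h1 : π j ≤ π (durfee π + 1) := h.2.1 _ _ (by omega) (by omega)
  have h2 : π (durfee π + 1) ≤ durfee π := by
    by_contra hc
    push_neg at hc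
    have : durfee π + 1 ≤ durfee π := le_durfee h (by omega)
    omega
  omega

lemma core_ge {π : ℕ → ℕ} (h : IsPartition π) {i : ℕ} (hi : 1 ≤ i) (hid : i ≤ durfee π) :
    durfee π ≤ π i ∧ durfee π ≤ conj π i := by
  have hd1 : 1 ≤ durfee π := le_trans hi hid
  have hπ : durfee π ≤ π i := le_trans (durfee_mem h) (h.2.1 _ _ hi hid)
  refine ⟨hπ, ?_⟩
  rw [le_conj_iff h hd1 hi]
  exact le_trans hid (durfee_mem h)

lemma conj_le_durfee {π : ℕ → ℕ} (h : IsPartition π) {i : ℕ} (hi : durfee π < i) :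
    conj π i ≤ durfee π := by
  by_contra hc
  push_neg at hc
  have h1 : durfee π + 1 ≤ conj π i := hc
  have hi1 : 1 ≤ i := by omega
  rw [le_conj_iff h (by omega) hi1] at h1
  have := part_le_durfee h (show durfee π < durfee π + 1 by omega)
  omega

lemma size_eq_sum {π : ℕ → ℕ} {N : ℕ} (hN : ∀ j, N ≤ j → π j = 0) :
    size π = ∑ j ∈ Finset.range N, π j := by
  apply tsum_eq_sum
  intro b hb
  exact hN b (by simpa using hb)

lemma durfee_zero_size {π : ℕ → ℕ} (h : IsPartition π) (hd : durfee π = 0) : size π = 0 := by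
  have h1 : π 1 = 0 := by
    by_contra hc
    have : 1 ≤ durfee π := le_durfee h (by omega)
    omega
  have hz : ∀ j, 1 ≤ j → π j = 0 := by
    intro j hj
    have := h.2.1 1 j (by omega) hj
    omega
  rw [size_eq_sum (N := 1) (fun j hj => hz j hj)]
  simp [h.1]

lemma hook_sum {π : ℕ → ℕ} (h : IsPartition π) :
    size π + durfee π * durfee π = ∑ i ∈ Finset.Icc 1 (durfee π), (π i + conj π i) := by
  set d := durfee π with hd
  rcases Nat.eq_zero_or_pos d with h0 | hdpos
  · have hs : size π = 0 := durfee_zero_size h (by omega)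
    rw [h0, hs]; simp
  obtain ⟨N₀, hN₀⟩ := h.2.2
  set N := N₀ + d + 1 with hNdef
  have hN : ∀ j, N ≤ j → π j = 0 := fun j hj => hN₀ j (by omega)
  have hdN : d + 1 ≤ N := by omega
  have hsz : size π = ∑ j ∈ Finset.range N, π j := size_eq_sum hN
  -- split
  have hsplit : ∑ j ∈ Finset.range N, π j
      = ∑ j ∈ Finset.Icc 1 d, π j + ∑ j ∈ Finset.Ico (d+1) N, π j := by
    rw [Finset.range_eq_Ico, ← Finset.sum_Ico_consecutive _ (by omega : 0 ≤ d + 1) hdN]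
    congr 1
    rw [show Finset.Ico 0 (d+1) = insert 0 (Finset.Icc 1 d) by
      ext x; simp [Finset.mem_Ico, Finset.mem_Icc]; omega]
    rw [Finset.sum_insert (by simp)]
    rw [h.1]; omega
  -- second sum via double counting
  have hconjN : ∀ i, 1 ≤ i → conj π i ≤ N - 1 := by
    intro i hi
    by_contra hc
    push_neg at hc
    have h1 : N ≤ conj π i := by omega
    rw [le_conj_iff h (by omega) hi] at h1
    have := hN N (le_refl N)
    omega
  have hsecond : ∑ j ∈ Finset.Ico (d+1) N, π j
      = ∑ i ∈ Finset.Icc 1 d, (conj π i - d) := by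
    have hterm : ∀ j ∈ Finset.Ico (d+1) N, π j = ∑ i ∈ Finset.Icc 1 d, (if i ≤ π j then 1 else 0) := by
      intro j hj
      simp only [Finset.mem_Ico] at hj
      have hle : π j ≤ d := part_le_durfee h (by omega)
      rw [← Finset.card_filter]
      have : Finset.filter (fun i => i ≤ π j) (Finset.Icc 1 d) = Finset.Icc 1 (π j) := by
        ext x; simp [Finset.mem_Icc, Finset.mem_filter]; omega
      rw [this]
      simp [Nat.card_Icc]
    rw [Finset.sum_congr rfl hterm, Finset.sum_comm]
    apply Finset.sum_congr rfl
    intro i hi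
    simp only [Finset.mem_Icc] at hi
    rw [← Finset.card_filter]
    have hfil : Finset.filter (fun j => i ≤ π j) (Finset.Ico (d+1) N) = Finset.Ico (d+1) (conj π i + 1) := by
      ext j
      simp only [Finset.mem_filter, Finset.mem_Ico]
      constructor
      · rintro ⟨⟨hj1, hj2⟩, hj3⟩
        refine ⟨hj1, ?_⟩
        have : j ≤ conj π i := (le_conj_iff h (by omega) hi.1).2 hj3
        omega
      · rintro ⟨hj1, hj2⟩
        have hjc : j ≤ conj π i := by omega
        have := hconjN i hi.1
        refine ⟨⟨hj1, by omega⟩, (le_conj_iff h (by omega) hi.1).1 hjc⟩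
    rw [hfil]
    simp [Nat.card_Ico]
  have hconjd : ∀ i ∈ Finset.Icc 1 d, d ≤ conj π i := by
    intro i hi
    simp only [Finset.mem_Icc] at hi
    exact (core_ge h hi.1 hi.2).2
  have hfinal : ∑ i ∈ Finset.Icc 1 d, (conj π i - d) + d * d = ∑ i ∈ Finset.Icc 1 d, conj π i := by
    have : ∑ i ∈ Finset.Icc 1 d, (conj π i - d) + ∑ i ∈ Finset.Icc 1 d, d
        = ∑ i ∈ Finset.Icc 1 d, conj π i := by
      rw [← Finset.sum_add_distrib]
      apply Finset.sum_congr rfl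
      intro i hi
      have := hconjd i hi
      omega
    simp only [Finset.sum_const, Nat.card_Icc, smul_eq_mul, Nat.add_sub_cancel] at this
    omega
  rw [hsz, hsplit, Finset.sum_add_distrib, ← hfinal, hsecond]
  omega

lemma antitone_of_adj {f : ℕ → ℕ} (hf : ∀ i, 1 ≤ i → f (i + 1) ≤ f i) :
    ∀ i j, 1 ≤ i → i ≤ j → f j ≤ f i := by
  intro i j hi hij
  induction j, hij using Nat.le_induction with
  | base => exact le_refl _
  | succ m hm ih => exact le_trans (hf m (by omega)) ih

lemma angPart_pos {π : ℕ → ℕ} (h : IsPartition π) {i : ℕ} (hi : 1 ≤ i) (hid : i ≤ durfee π) :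
    1 ≤ angPart π i := by
  obtain ⟨h1, h2⟩ := core_ge h hi hid
  rw [angPart, if_pos ⟨hi, hid⟩]
  omega

lemma angPart_gap {π : ℕ → ℕ} (h : IsPartition π) {i : ℕ} (hi : 1 ≤ i)
    (hid : i + 1 ≤ durfee π) : angPart π (i + 1) + 2 ≤ angPart π i := by
  have hm1 : π (i + 1) ≤ π i := h.2.1 _ _ hi (by omega)
  have hm2 : conj π (i + 1) ≤ conj π i := by
    rcases Nat.eq_zero_or_pos (conj π (i+1)) with h0 | hp
    · omega
    · have : conj π (i+1) ≤ conj π i ↔ i + 1 ≤ π (conj π (i+1)) := by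
        constructor
        · intro _; exact (le_conj_iff h (by omega) (by omega)).1 (le_refl _)
        · intro hx
          have := (le_conj_iff h (by omega) hi).2 (by omega : i ≤ π (conj π (i+1)))
          omega
      exact this.2 ((le_conj_iff h (by omega) (by omega)).1 (le_refl _))
  obtain ⟨c1, c2⟩ := core_ge h (by omega : (1:ℕ) ≤ i + 1) hid
  rw [angPart, if_pos ⟨(by omega : (1:ℕ) ≤ i + 1), hid⟩, angPart, if_pos ⟨hi, (by omega : i ≤ durfee π)⟩]
  omega

lemma angPart_isPartition {π : ℕ → ℕ} (h : IsPartition π) : IsPartition (angPart π) := by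
  refine ⟨by simp [angPart], ?_, ⟨durfee π + 1, ?_⟩⟩
  · apply antitone_of_adj
    intro i hi
    by_cases hc : i + 1 ≤ durfee π
    · have := angPart_gap h hi hc
      omega
    · rw [angPart, if_neg (by omega)]
      omega
  · intro j hj
    rw [angPart, if_neg (by omega)]

lemma angPart_pos_iff {π : ℕ → ℕ} (h : IsPartition π) {i : ℕ} :
    1 ≤ angPart π i ↔ (1 ≤ i ∧ i ≤ durfee π) := by
  constructor
  · intro hp
    by_contra hc
    rw [angPart, if_neg hc] at hp
    omega
  · rintro ⟨h1, h2⟩; exact angPart_pos h h1 h2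

lemma len_angPart {π : ℕ → ℕ} (h : IsPartition π) : len (angPart π) = durfee π := by
  rw [len, conj]
  have : {j : ℕ | 1 ≤ j ∧ 1 ≤ angPart π j} = Set.Icc 1 (durfee π) := by
    ext j
    rw [Set.mem_setOf_eq, Set.mem_Icc, angPart_pos_iff h]
    tauto
  rw [this, ncard_Icc']
  omega

lemma gauss_icc (d : ℕ) : 2 * ∑ i ∈ Finset.Icc 1 d, i = d * (d + 1) := by
  induction d with
  | zero => simp
  | succ m ih =>
    rw [show Finset.Icc 1 (m+1) = insert (m+1) (Finset.Icc 1 m) by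
      ext x; simp [Finset.mem_Icc, Finset.mem_insert]; omega]
    rw [Finset.sum_insert (by simp)]
    ring_nf
    ring_nf at ih
    omega

lemma size_angPart {π : ℕ → ℕ} (h : IsPartition π) : size (angPart π) = size π := by
  set d := durfee π with hd
  have hvan : ∀ j, d + 1 ≤ j → angPart π j = 0 := fun j hj => by
    rw [angPart, if_neg (by omega)]
  have h1 : size (angPart π) = ∑ j ∈ Finset.range (d + 1), angPart π j := size_eq_sum hvan
  have h2 : ∑ j ∈ Finset.range (d + 1), angPart π j = ∑ j ∈ Finset.Icc 1 d, angPart π j := by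
    rw [Finset.range_eq_Ico, show Finset.Ico 0 (d+1) = insert 0 (Finset.Icc 1 d) by
      ext x; simp [Finset.mem_Ico, Finset.mem_Icc]; omega]
    rw [Finset.sum_insert (by simp)]
    rw [show angPart π 0 = 0 by rw [angPart, if_neg (by omega)]]
    omega
  have h3 : ∑ j ∈ Finset.Icc 1 d, angPart π j + 2 * ∑ i ∈ Finset.Icc 1 d, i
      = ∑ i ∈ Finset.Icc 1 d, (π i + conj π i) + d := by
    have : ∑ j ∈ Finset.Icc 1 d, (angPart π j + 2 * j)
        = ∑ i ∈ Finset.Icc 1 d, (π i + conj π i + 1) := by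
      apply Finset.sum_congr rfl
      intro i hi
      simp only [Finset.mem_Icc] at hi
      obtain ⟨c1, c2⟩ := core_ge h hi.1 hi.2
      rw [angPart, if_pos ⟨hi.1, hi.2⟩]
      omega
    rw [Finset.sum_add_distrib, ← Finset.mul_sum] at this
    rw [Finset.sum_add_distrib] at this
    simp only [Finset.sum_const, Nat.card_Icc, smul_eq_mul, Nat.add_sub_cancel, mul_one] at this
    omega
  have h4 := hook_sum h
  have h5 := gauss_icc d
  rw [h1, h2]
  rw [← hd] at h4
  have h6 : d * (d + 1) = d * d + d := by ring
  omega

lemma conj_conj_repr {π : ℕ → ℕ} (h : IsPartition π) {j : ℕ} (hj : 1 ≤ j) :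
    π j = {i : ℕ | 1 ≤ i ∧ j ≤ conj π i}.ncard := by
  have heq : {i : ℕ | 1 ≤ i ∧ j ≤ conj π i} = Set.Icc 1 (π j) := by
    ext i
    rcases Nat.eq_zero_or_pos i with h0 | h1
    · subst h0; simp [Set.mem_Icc]
    · simp only [Set.mem_setOf_eq, Set.mem_Icc]
      rw [le_conj_iff h hj h1]
  rw [heq, ncard_Icc']
  omega

lemma inj_on_lemma {π τ : ℕ → ℕ} (hπ : IsPartition π) (hτ : IsPartition τ)
    (hrπ : ∀ i, 1 ≤ i → i ≤ durfee π → rank π i ∈ ({0, 1} : Set ℤ))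
    (hrτ : ∀ i, 1 ≤ i → i ≤ durfee τ → rank τ i ∈ ({0, 1} : Set ℤ))
    (heq : angPart π = angPart τ) : π = τ := by
  have hdd : durfee π = durfee τ := by
    by_contra hne
    rcases Nat.lt_or_ge (durfee π) (durfee τ) with hlt | hge
    · have h1 := angPart_pos hτ (show 1 ≤ durfee τ by omega) (le_refl _)
      rw [← heq, angPart_pos_iff hπ] at h1
      omega
    · have hlt : durfee τ < durfee π := by omega
      have h1 := angPart_pos hπ (show 1 ≤ durfee π by omega) (le_refl _)
      rw [heq, angPart_pos_iff hτ] at h1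
      omega
  set d := durfee π with hd
  have hcore : ∀ i, 1 ≤ i → i ≤ d → π i = τ i ∧ conj π i = conj τ i := by
    intro i hi hid
    have h1 : angPart π i = angPart τ i := by rw [heq]
    rw [angPart, if_pos ⟨hi, hid⟩, angPart, if_pos ⟨hi, show i ≤ durfee τ by omega⟩] at h1
    obtain ⟨c1, c2⟩ := core_ge hπ hi hid
    obtain ⟨c3, c4⟩ := core_ge hτ hi (by omega)
    have hr1 := hrπ i hi hid
    have hr2 := hrτ i hi (by omega)
    simp only [Set.mem_insert_iff, Set.mem_singleton_iff, rank] at hr1 hr2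
    rw [← hdd] at c3 c4
    constructor <;> omega
  funext j
  rcases Nat.eq_zero_or_pos j with h0 | h1
  · subst h0; rw [hπ.1, hτ.1]
  by_cases hjd : j ≤ d
  · exact (hcore j h1 hjd).1
  · push_neg at hjd
    have hset : {i : ℕ | 1 ≤ i ∧ j ≤ conj π i} = {i : ℕ | 1 ≤ i ∧ j ≤ conj τ i} := by
      ext i
      simp only [Set.mem_setOf_eq]
      constructor
      · rintro ⟨hi1, hi2⟩
        have hile : i ≤ d := by
          by_contra hc
          push_neg at hc
          have := conj_le_durfee hπ (show durfee π < i by omega)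
          omega
        exact ⟨hi1, by rw [← (hcore i hi1 hile).2]; exact hi2⟩
      · rintro ⟨hi1, hi2⟩
        have hile : i ≤ d := by
          by_contra hc
          push_neg at hc
          have := conj_le_durfee hτ (show durfee τ < i by omega)
          omega
        exact ⟨hi1, by rw [(hcore i hi1 hile).2]; exact hi2⟩
    rw [conj_conj_repr hπ h1, conj_conj_repr hτ h1, hset]

noncomputable def rr (α : ℕ → ℕ) (i : ℕ) : ℕ := (α i + 1) % 2
noncomputable def rho (α : ℕ → ℕ) (i : ℕ) : ℕ := (α i + 2 * i - 1 + rr α i) / 2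
noncomputable def sig (α : ℕ → ℕ) (i : ℕ) : ℕ := (α i + 2 * i - 1 - rr α i) / 2

noncomputable def build (α : ℕ → ℕ) (j : ℕ) : ℕ :=
  if j = 0 then 0
  else if j ≤ len α then rho α j
  else ((Finset.Icc 1 (len α)).filter (fun i => j ≤ sig α i)).card

lemma antitone_of_adj_upto {f : ℕ → ℕ} {d : ℕ} (hf : ∀ i, 1 ≤ i → i + 1 ≤ d → f (i + 1) ≤ f i) :
    ∀ i j, 1 ≤ i → i ≤ j → j ≤ d → f j ≤ f i := by
  intro i j hi hij hjd
  induction j, hij using Nat.le_induction with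
  | base => exact le_refl _
  | succ m hm ih => exact le_trans (hf m (by omega) hjd) (ih (by omega))

section SurjSetup
variable {α : ℕ → ℕ} (hα : IsPartition α)

lemma len_spec (hα : IsPartition α) : ∀ i, 1 ≤ i → (1 ≤ α i ↔ i ≤ len α) := by
  intro i hi
  have h1 := key_set_eq hα (k := 1) (le_refl 1)
  constructor
  · intro hp
    have : i ∈ {j : ℕ | 1 ≤ j ∧ 1 ≤ α j} := ⟨hi, hp⟩
    rw [h1] at this
    exact this.2
  · intro hp
    have : i ∈ Set.Icc 1 (conj α 1) := ⟨hi, hp⟩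
    rw [← h1] at this
    exact this.2

lemma alpha_zero (hα : IsPartition α) {i : ℕ} (hi : len α < i) : α i = 0 := by
  rcases Nat.eq_zero_or_pos i with h0 | h1
  · subst h0; exact hα.1
  · have := len_spec hα i h1
    omega

lemma two_rho {i : ℕ} (hi : 1 ≤ i) :
    2 * rho α i = α i + 2 * i - 1 + rr α i ∧ 2 * sig α i = α i + 2 * i - 1 - rr α i
      ∧ rr α i ≤ 1 ∧ rr α i = (α i + 1) % 2 := by
  have h1 : rr α i = (α i + 1) % 2 := rfl
  have h2 : rho α i = (α i + 2 * i - 1 + rr α i) / 2 := rfl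
  have h3 : sig α i = (α i + 2 * i - 1 - rr α i) / 2 := rfl
  omega

end SurjSetup

section SurjMain
variable {α : ℕ → ℕ}

lemma sig_adj (hα : IsPartition α)
    (hgap : ∀ i, 1 ≤ i → i + 1 ≤ len α → α (i + 1) + 2 ≤ α i) :
    ∀ i, 1 ≤ i → i + 1 ≤ len α → sig α (i + 1) ≤ sig α i ∧ rho α (i + 1) ≤ rho α i := by
  intro i hi hid
  obtain ⟨e1, e2, e3, e4⟩ := two_rho (α := α) hi
  obtain ⟨f1, f2, f3, f4⟩ := two_rho (α := α) (show 1 ≤ i + 1 by omega)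
  have hg := hgap i hi hid
  omega

lemma sig_mono (hα : IsPartition α)
    (hgap : ∀ i, 1 ≤ i → i + 1 ≤ len α → α (i + 1) + 2 ≤ α i) :
    ∀ i j, 1 ≤ i → i ≤ j → j ≤ len α → sig α j ≤ sig α i :=
  antitone_of_adj_upto (fun i hi hd => (sig_adj hα hgap i hi hd).1)

lemma rho_mono (hα : IsPartition α)
    (hgap : ∀ i, 1 ≤ i → i + 1 ≤ len α → α (i + 1) + 2 ≤ α i) :
    ∀ i j, 1 ≤ i → i ≤ j → j ≤ len α → rho α j ≤ rho α i :=
  antitone_of_adj_upto (fun i hi hd => (sig_adj hα hgap i hi hd).2)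

lemma sig_ge (hα : IsPartition α)
    (hgap : ∀ i, 1 ≤ i → i + 1 ≤ len α → α (i + 1) + 2 ≤ α i) :
    ∀ i, 1 ≤ i → i ≤ len α → len α ≤ sig α i ∧ sig α i ≤ rho α i := by
  intro i hi hid
  have h1 : sig α (len α) ≤ sig α i := sig_mono hα hgap i (len α) hi hid (le_refl _)
  obtain ⟨e1, e2, e3, e4⟩ := two_rho (α := α) (show 1 ≤ len α by omega)
  obtain ⟨g1, g2, g3, g4⟩ := two_rho (α := α) hi
  have hpos : 1 ≤ α (len α) := (len_spec hα (len α) (by omega)).2 (le_refl _)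
  omega

lemma count_le {j : ℕ} : ((Finset.Icc 1 (len α)).filter (fun i => j ≤ sig α i)).card ≤ len α := by
  have := Finset.card_filter_le (Finset.Icc 1 (len α)) (fun i => j ≤ sig α i)
  simpa [Nat.card_Icc] using this

lemma build_isPartition (hα : IsPartition α)
    (hgap : ∀ i, 1 ≤ i → i + 1 ≤ len α → α (i + 1) + 2 ≤ α i) :
    IsPartition (build α) := by
  set d := len α with hd
  refine ⟨by simp [build], ?_, ⟨sig α 1 + d + 2, ?_⟩⟩
  · apply antitone_of_adj
    intro i hi
    by_cases h1 : i + 1 ≤ d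
    · rw [build, if_neg (by omega), if_pos h1, build, if_neg (by omega), if_pos (by omega)]
      exact (sig_adj hα hgap i hi h1).2
    · by_cases h2 : i ≤ d
      · -- i = d
        rw [build, if_neg (by omega), if_neg (by omega), build, if_neg (by omega), if_pos h2]
        have hc := count_le (α := α) (j := i + 1)
        obtain ⟨s1, s2⟩ := sig_ge hα hgap i hi h2
        omega
      · rw [build, if_neg (by omega), if_neg (by omega), build, if_neg (by omega), if_neg (by omega)]
        apply Finset.card_le_card
        intro x hx
        simp only [Finset.mem_filter] at hx ⊢
        exact ⟨hx.1, by omega⟩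
  · intro j hj
    rw [build, if_neg (by omega), if_neg (by omega)]
    rw [Finset.card_eq_zero, Finset.filter_eq_empty_iff]
    intro x hx
    simp only [Finset.mem_Icc] at hx
    have := sig_mono hα hgap 1 x (le_refl 1) hx.1 hx.2
    omega

lemma build_durfee (hα : IsPartition α)
    (hgap : ∀ i, 1 ≤ i → i + 1 ≤ len α → α (i + 1) + 2 ≤ α i) :
    durfee (build α) = len α := by
  set d := len α with hd
  have hpart := build_isPartition hα hgap
  apply le_antisymm
  · by_contra hc
    push_neg at hc
    have h1 := durfee_mem hpart
    have h2 : build α (durfee (build α)) ≤ d := by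
      rw [build, if_neg (by omega), if_neg (by omega)]
      exact count_le
    omega
  · apply le_durfee hpart
    rcases Nat.eq_zero_or_pos d with h0 | h1
    · omega
    · rw [build, if_neg (by omega), if_pos (le_refl _)]
      obtain ⟨s1, s2⟩ := sig_ge hα hgap d h1 (le_refl _)
      omega

lemma build_conj (hα : IsPartition α)
    (hgap : ∀ i, 1 ≤ i → i + 1 ≤ len α → α (i + 1) + 2 ≤ α i) :
    ∀ i, 1 ≤ i → i ≤ len α → conj (build α) i = sig α i := by
  intro i hi hid
  have hiff : ∀ j, 1 ≤ j → (i ≤ build α j ↔ j ≤ sig α i) := by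
    intro j hj
    by_cases hjd : j ≤ len α
    · obtain ⟨s1, s2⟩ := sig_ge hα hgap j hj hjd
      obtain ⟨t1, t2⟩ := sig_ge hα hgap i hi hid
      rw [build, if_neg (by omega), if_pos hjd]
      constructor
      · intro _; omega
      · intro _; omega
    · push_neg at hjd
      rw [build, if_neg (by omega), if_neg (by omega)]
      constructor
      · intro hcard
        by_contra hc
        push_neg at hc
        have hsub : (Finset.Icc 1 (len α)).filter (fun x => j ≤ sig α x) ⊆ Finset.Ico 1 i := by
          intro x hx
          simp only [Finset.mem_filter, Finset.mem_Icc] at hx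
          simp only [Finset.mem_Ico]
          refine ⟨hx.1.1, ?_⟩
          by_contra hxi
          push_neg at hxi
          have := sig_mono hα hgap i x hi hxi hx.1.2
          omega
        have := Finset.card_le_card hsub
        rw [Nat.card_Ico] at this
        omega
      · intro hsig
        have hsub : Finset.Icc 1 i ⊆ (Finset.Icc 1 (len α)).filter (fun x => j ≤ sig α x) := by
          intro x hx
          simp only [Finset.mem_Icc] at hx
          simp only [Finset.mem_filter, Finset.mem_Icc]
          refine ⟨⟨hx.1, by omega⟩, ?_⟩
          have := sig_mono hα hgap x i hx.1 hx.2 hid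
          omega
        have := Finset.card_le_card hsub
        rw [Nat.card_Icc] at this
        omega
  have hset : {j : ℕ | 1 ≤ j ∧ i ≤ build α j} = Set.Icc 1 (sig α i) := by
    ext j
    rcases Nat.eq_zero_or_pos j with h0 | h1
    · subst h0; simp [Set.mem_Icc]
    · simp only [Set.mem_setOf_eq, Set.mem_Icc]
      rw [hiff j h1]
  rw [conj, hset, ncard_Icc']
  omega

lemma build_size (hα : IsPartition α)
    (hgap : ∀ i, 1 ≤ i → i + 1 ≤ len α → α (i + 1) + 2 ≤ α i) :
    size (build α) = size α := by
  set d := len α with hd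
  have hpart := build_isPartition hα hgap
  have h1 := hook_sum hpart
  rw [build_durfee hα hgap, ← hd] at h1
  have hA : ∑ i ∈ Finset.Icc 1 d, (build α i + conj (build α) i)
      = ∑ i ∈ Finset.Icc 1 d, (α i + 2 * i - 1) := by
    apply Finset.sum_congr rfl
    intro i hi
    simp only [Finset.mem_Icc] at hi
    rw [build, if_neg (by omega), if_pos (show i ≤ len α from hi.2), build_conj hα hgap i hi.1 hi.2]
    obtain ⟨e1, e2, e3, e4⟩ := two_rho (α := α) hi.1
    omega
  have hB : ∑ i ∈ Finset.Icc 1 d, (α i + 2 * i - 1) + d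
      = ∑ i ∈ Finset.Icc 1 d, α i + 2 * ∑ i ∈ Finset.Icc 1 d, i := by
    have hC : ∑ i ∈ Finset.Icc 1 d, (α i + 2 * i - 1 + 1)
        = ∑ i ∈ Finset.Icc 1 d, (α i + 2 * i) := by
      apply Finset.sum_congr rfl
      intro i hi
      simp only [Finset.mem_Icc] at hi
      omega
    rw [Finset.sum_add_distrib] at hC
    rw [Finset.sum_add_distrib, ← Finset.mul_sum] at hC
    simp only [Finset.sum_const, Nat.card_Icc, smul_eq_mul, Nat.add_sub_cancel, mul_one] at hC
    omega
  have hszα : size α = ∑ i ∈ Finset.Icc 1 d, α i := by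
    have hvan : ∀ j, d + 1 ≤ j → α j = 0 := fun j hj => alpha_zero hα (by omega)
    rw [size_eq_sum hvan, Finset.range_eq_Ico,
      show Finset.Ico 0 (d+1) = insert 0 (Finset.Icc 1 d) by
        ext x; simp [Finset.mem_Ico, Finset.mem_Icc]; omega,
      Finset.sum_insert (by simp), hα.1]
    omega
  have hg := gauss_icc d
  have hnl : d * (d + 1) = d * d + d := by ring
  omega

lemma build_rank (hα : IsPartition α)
    (hgap : ∀ i, 1 ≤ i → i + 1 ≤ len α → α (i + 1) + 2 ≤ α i) :
    ∀ i, 1 ≤ i → i ≤ durfee (build α) → rank (build α) i ∈ ({0, 1} : Set ℤ) := by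
  intro i hi hid
  rw [build_durfee hα hgap] at hid
  simp only [Set.mem_insert_iff, Set.mem_singleton_iff, rank]
  rw [build, if_neg (by omega), if_pos hid, build_conj hα hgap i hi hid]
  obtain ⟨e1, e2, e3, e4⟩ := two_rho (α := α) hi
  omega

lemma build_angPart (hα : IsPartition α)
    (hgap : ∀ i, 1 ≤ i → i + 1 ≤ len α → α (i + 1) + 2 ≤ α i) :
    angPart (build α) = α := by
  funext j
  rcases Nat.eq_zero_or_pos j with h0 | h1
  · subst h0
    rw [angPart, if_neg (by omega), hα.1]
  by_cases hjd : j ≤ len α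
  · rw [angPart, if_pos ⟨h1, by rw [build_durfee hα hgap]; exact hjd⟩]
    rw [build, if_neg (by omega), if_pos hjd, build_conj hα hgap j h1 hjd]
    obtain ⟨e1, e2, e3, e4⟩ := two_rho (α := α) h1
    omega
  · rw [angPart, if_neg (by rw [build_durfee hα hgap]; omega), alpha_zero hα (by omega)]

end SurjMain

theorem stmt5 (n : ℕ) :
    Set.BijOn angPart
      {π | IsPartition π ∧ size π = n ∧
        ∀ i, 1 ≤ i → i ≤ durfee π → rank π i ∈ ({0, 1} : Set ℤ)}
      {α | IsPartition α ∧ size α = n ∧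
        (∀ i, 1 ≤ i → i + 1 ≤ len α → α (i + 1) + 2 ≤ α i)} := by
  refine ⟨?_, ?_, ?_⟩
  · rintro π ⟨hπ, hsz, _⟩
    refine ⟨angPart_isPartition hπ, ?_, ?_⟩
    · rw [size_angPart hπ]; exact hsz
    · intro i hi hil
      rw [len_angPart hπ] at hil
      exact angPart_gap hπ hi hil
  · rintro π ⟨hπ, _, hrπ⟩ τ ⟨hτ, _, hrτ⟩ heq
    exact inj_on_lemma hπ hτ hrπ hrτ heq
  · rintro β ⟨hβ, hsz, hgap⟩
    refine ⟨build β, ⟨build_isPartition hβ hgap, ?_, build_rank hβ hgap⟩, build_angPart hβ hgap⟩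
    rw [build_size hβ hgap]
    exact hsz
end

section
/- Let 0 < r ≤ M/2 and k = ⌊M/2⌋. The map sending a partition π ∈ A_n(M,r) to the (k−1)-color partition (α(π), c) with α_i = π_i + π'_i − 2i + 1 and color c(i) = (r_i + r − 1)/2 if α_i ≡ r (mod 2) and c(i) = (r_i + r)/2 otherwise, is a bijection from A_n(M,r) onto C_n(M,r). Consequently |A_n(M,r)| = |C_n(M,r)|. -/
/-- The color assigned to the `i`-th angle: `(r_i + r - 1)/2` if `α_i ≡ r (mod 2)`,
`(r_i + r)/2` otherwise (and `0` outside the range `1 ≤ i ≤ d(π)`). -/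
noncomputable def colorOf (r : ℕ) (π : ℕ → ℕ) (i : ℕ) : ℕ :=
  if 1 ≤ i ∧ i ≤ durfee π then
    (if angPart π i % 2 = r % 2 then ((rank π i + r - 1) / 2).toNat
     else ((rank π i + r) / 2).toNat)
  else 0

/-- `A_n(M,r)`: partitions of `n` with all successive ranks in `[-r+2, M-r-2]`. -/
def Aset (n M r : ℕ) : Set (ℕ → ℕ) :=
  {π | IsPartition π ∧ size π = n ∧
    ∀ i, 1 ≤ i → i ≤ durfee π → -(r : ℤ) + 2 ≤ rank π i ∧ rank π i ≤ (M : ℤ) - r - 2}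

/-- A `t`-color partition: a partition together with a color function into `{1,…,t}`,
weakly increasing on equal parts, normalized to `0` outside the index range. -/
def IsColoredPartition (t : ℕ) (p : (ℕ → ℕ) × (ℕ → ℕ)) : Prop :=
  IsPartition p.1 ∧
  (∀ i, 1 ≤ i → i ≤ len p.1 → 1 ≤ p.2 i ∧ p.2 i ≤ t) ∧
  (∀ i, 1 ≤ i → i + 1 ≤ len p.1 → p.1 i = p.1 (i + 1) → p.2 i ≤ p.2 (i + 1)) ∧
  (∀ i, i = 0 ∨ len p.1 < i → p.2 i = 0)

/-- Conditions (i)–(iii) of the Main Theorem defining `C_n(M,r)` (with `k = ⌊M/2⌋`). -/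
def CCond (M r : ℕ) (α c : ℕ → ℕ) : Prop :=
  (∀ i, 1 ≤ i → i ≤ len α →
    if α i % 2 = r % 2 then (α i : ℤ) > |2 * (c i : ℤ) - r + 1|
    else (α i : ℤ) > |2 * (c i : ℤ) - r|) ∧
  (∀ i, 1 ≤ i → i + 1 ≤ len α →
    (α i : ℤ) - (α (i + 1) : ℤ) ≥ 2 +
      (if α i % 2 = α (i + 1) % 2 then |2 * ((c i : ℤ) - (c (i + 1) : ℤ))|
       else if α (i + 1) % 2 = r % 2 then |2 * ((c i : ℤ) - (c (i + 1) : ℤ)) - 1|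
       else |2 * ((c i : ℤ) - (c (i + 1) : ℤ)) + 1|)) ∧
  (∀ i, 1 ≤ i → i ≤ len α → M % 2 = 0 → c i = M / 2 - 1 → α i % 2 ≠ r % 2)

/-- `C_n(M,r)`: the `(k-1)`-color partitions of `n` satisfying conditions (i)–(iii). -/
def Cset (n M r : ℕ) : Set ((ℕ → ℕ) × (ℕ → ℕ)) :=
  {p | IsColoredPartition (M / 2 - 1) p ∧ size p.1 = n ∧ CCond M r p.1 p.2}


namespace StmtAux



lemma ncard_eq_card (s : Set ℕ) (t : Finset ℕ) (h : ∀ x, x ∈ s ↔ x ∈ t) : s.ncard = t.card := by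
  rw [show s = ↑t from Set.ext (by simpa using h)]; exact Set.ncard_coe_finset t

lemma ncard_Icc (a b : ℕ) : (Set.Icc a b).ncard = b + 1 - a := by
  rw [← Finset.coe_Icc, Set.ncard_coe_finset, Nat.card_Icc]

/-- Key characterization of the conjugate for genuine partitions. -/
lemma conj_ge_iff {π : ℕ → ℕ} (hπ : IsPartition π) {i m : ℕ} (hi : 1 ≤ i) (hm : 1 ≤ m) :
    m ≤ conj π i ↔ i ≤ π m := by
  obtain ⟨h0, hmono, N, hN⟩ := hπ
  have hfin : {j : ℕ | 1 ≤ j ∧ i ≤ π j}.Finite := by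
    apply (Set.finite_Icc 1 N).subset
    rintro j ⟨hj1, hji⟩
    refine ⟨hj1, ?_⟩
    by_contra hc
    have : π j = 0 := hN j (by omega)
    omega
  constructor
  · intro h
    by_contra hc
    have hsub : {j : ℕ | 1 ≤ j ∧ i ≤ π j} ⊆ Set.Icc 1 (m - 1) := by
      rintro j ⟨hj1, hji⟩
      refine ⟨hj1, ?_⟩
      by_contra hc2
      have := hmono m j hm (by omega)
      omega
    have := Set.ncard_le_ncard hsub (Set.finite_Icc _ _)
    rw [ncard_Icc] at this
    unfold conj at h
    omega
  · intro h
    have hsub : Set.Icc 1 m ⊆ {j : ℕ | 1 ≤ j ∧ i ≤ π j} := by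
      rintro j ⟨hj1, hjm⟩
      exact ⟨hj1, le_trans h (hmono j m hj1 hjm)⟩
    have := Set.ncard_le_ncard hsub hfin
    rw [ncard_Icc] at this
    unfold conj
    omega

lemma le_len_iff {π : ℕ → ℕ} (hπ : IsPartition π) {i : ℕ} (hi : 1 ≤ i) :
    i ≤ len π ↔ 1 ≤ π i := conj_ge_iff hπ le_rfl hi

lemma part_eq_zero_of_len_lt {π : ℕ → ℕ} (hπ : IsPartition π) {i : ℕ} (h : len π < i) :
    π i = 0 := by
  rcases Nat.eq_zero_or_pos i with h0 | h1
  · subst h0; exact hπ.1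
  · have := (le_len_iff hπ h1)
    omega





lemma durfee_mem {π : ℕ → ℕ} (hπ : IsPartition π) : durfee π ≤ π (durfee π) := by
  obtain ⟨h0, hmono, N, hN⟩ := hπ
  have hbdd : BddAbove {d : ℕ | d ≤ π d} := by
    refine ⟨N, fun d hd => ?_⟩
    by_contra hc
    have := hN d (by omega)
    simp only [Set.mem_setOf_eq] at hd
    omega
  have : durfee π ∈ {d : ℕ | d ≤ π d} :=
    Nat.sSup_mem ⟨0, by simp [h0]⟩ hbdd
  exact this

lemma le_durfee {π : ℕ → ℕ} (hπ : IsPartition π) {i : ℕ} (h : i ≤ π i) : i ≤ durfee π := by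
  obtain ⟨h0, hmono, N, hN⟩ := hπ
  have hbdd : BddAbove {d : ℕ | d ≤ π d} := by
    refine ⟨N, fun d hd => ?_⟩
    by_contra hc
    have := hN d (by omega)
    simp only [Set.mem_setOf_eq] at hd
    omega
  exact le_csSup hbdd h

lemma part_lt_of_durfee_lt {π : ℕ → ℕ} (hπ : IsPartition π) {i : ℕ} (h : durfee π < i) :
    π i < i := by
  by_contra hc
  have := le_durfee hπ (i := i) (by omega)
  omega

lemma part_ge_on_diag {π : ℕ → ℕ} (hπ : IsPartition π) {i : ℕ} (h1 : 1 ≤ i)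
    (h2 : i ≤ durfee π) : durfee π ≤ π i := by
  have := durfee_mem hπ
  have := hπ.2.1 i (durfee π) h1 h2
  omega





def Good (l : ℕ) (a b : ℕ → ℕ) : Prop :=
  ∀ i, 1 ≤ i → i + 1 ≤ l → a (i+1) < a i ∧ b (i+1) < b i

lemma Good.symm {l a b} (h : Good l a b) : Good l b a :=
  fun i h1 h2 => ⟨(h i h1 h2).2, (h i h1 h2).1⟩

lemma Good.chain {l a b} (h : Good l a b) {i j : ℕ} (h1 : 1 ≤ i) (hij : i ≤ j) (hjl : j ≤ l) :
    a j + j ≤ a i + i ∧ b j + j ≤ b i + i := by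
  induction j, hij using Nat.le_induction with
  | base => exact ⟨le_rfl, le_rfl⟩
  | succ j hij ih =>
    have h2 := h j (by omega) hjl
    have h3 := ih (by omega)
    omega

noncomputable def mk (l : ℕ) (a b : ℕ → ℕ) (i : ℕ) : ℕ :=
  if i = 0 then 0
  else if i ≤ l then a i + i
  else ((Finset.Icc 1 l).filter (fun j => i ≤ b j + j)).card

lemma mk_zero (l : ℕ) (a b : ℕ → ℕ) : mk l a b 0 = 0 := by simp [mk]

lemma mk_in {l : ℕ} {a b : ℕ → ℕ} {i : ℕ} (h1 : 1 ≤ i) (h2 : i ≤ l) :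
    mk l a b i = a i + i := by
  unfold mk
  rw [if_neg (by omega : ¬ i = 0), if_pos h2]

lemma mk_out {l : ℕ} {a b : ℕ → ℕ} {i : ℕ} (h : l < i) :
    mk l a b i = ((Finset.Icc 1 l).filter (fun j => i ≤ b j + j)).card := by
  have : ¬ i = 0 := by omega
  simp [mk, this]; omega

lemma mk_out_le {l : ℕ} {a b : ℕ → ℕ} {i : ℕ} (h : l < i) : mk l a b i ≤ l := by
  rw [mk_out h]
  exact le_trans (Finset.card_filter_le _ _) (by simp)

lemma mk_congr {l : ℕ} {a b a' b' : ℕ → ℕ}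
    (ha : ∀ i, 1 ≤ i → i ≤ l → a i = a' i) (hb : ∀ i, 1 ≤ i → i ≤ l → b i = b' i) :
    mk l a b = mk l a' b' := by
  funext i
  unfold mk
  rcases Nat.eq_zero_or_pos i with h0 | h1
  · simp [h0]
  by_cases h2 : i ≤ l
  · simp only [if_neg (by omega : ¬ i = 0), if_pos h2, ha i h1 h2]
  · simp only [if_neg (by omega : ¬ i = 0), if_neg h2]
    congr 1
    apply Finset.filter_congr
    intro j hj
    simp only [Finset.mem_Icc] at hj
    rw [hb j hj.1 hj.2]

lemma isPartition_mk {l : ℕ} {a b : ℕ → ℕ} (h : Good l a b) : IsPartition (mk l a b) := by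
  refine ⟨mk_zero l a b, ?_, ?_⟩
  · intro i j h1 hij
    by_cases hjl : j ≤ l
    · rw [mk_in h1 (le_trans hij hjl), mk_in (by omega) hjl]
      exact (h.chain h1 hij hjl).1
    · push_neg at hjl
      rw [mk_out hjl]
      by_cases hil : i ≤ l
      · rw [mk_in h1 hil]
        have hc : ((Finset.Icc 1 l).filter (fun t => j ≤ b t + t)).card ≤ l :=
          le_trans (Finset.card_filter_le _ _) (by simp)
        rcases Nat.eq_zero_or_pos l with h0 | hl1
        · omega
        · have := (h.chain h1 hil le_rfl).1
          omega
      · push_neg at hil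
        rw [mk_out hil]
        apply Finset.card_le_card
        intro t ht
        simp only [Finset.mem_filter, Finset.mem_Icc] at ht ⊢
        omega
  · refine ⟨l + b 1 + 2, fun j hj => ?_⟩
    rw [mk_out (by omega)]
    convert Finset.card_empty
    rw [Finset.filter_eq_empty_iff]
    intro t ht
    simp only [Finset.mem_Icc] at ht
    have := (h.chain (i := 1) (j := t) le_rfl ht.1 ht.2).2
    omega

lemma conj_mk {l : ℕ} {a b : ℕ → ℕ} (h : Good l a b) {i : ℕ} (hi : 1 ≤ i) :
    conj (mk l a b) i = mk l b a i := by
  by_cases hil : i ≤ l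
  · rw [mk_in hi hil]
    have hset : {j : ℕ | 1 ≤ j ∧ i ≤ mk l a b j} = Set.Icc 1 (b i + i) := by
      ext j
      simp only [Set.mem_setOf_eq, Set.mem_Icc]
      constructor
      · rintro ⟨hj1, hji⟩
        refine ⟨hj1, ?_⟩
        by_cases hjl : j ≤ l
        · have := (h.chain hi hil le_rfl).2
          omega
        · push_neg at hjl
          rw [mk_out hjl] at hji
          by_contra hc
          push_neg at hc
          have hsub : (Finset.Icc 1 l).filter (fun t => j ≤ b t + t) ⊆ Finset.Icc 1 (i-1) := by
            intro t ht
            simp only [Finset.mem_filter, Finset.mem_Icc] at ht ⊢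
            refine ⟨ht.1.1, ?_⟩
            by_contra hc2
            have := (h.chain hi (by omega : i ≤ t) ht.1.2).2
            omega
          have := Finset.card_le_card hsub
          simp [Nat.card_Icc] at this
          omega
      · rintro ⟨hj1, hjb⟩
        refine ⟨hj1, ?_⟩
        by_cases hjl : j ≤ l
        · rw [mk_in hj1 hjl]
          by_cases hij : i ≤ j
          · omega
          · have := (h.chain hj1 (by omega : j ≤ i) hil).1
            omega
        · push_neg at hjl
          rw [mk_out hjl]
          have hsub : Finset.Icc 1 i ⊆ (Finset.Icc 1 l).filter (fun t => j ≤ b t + t) := by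
            intro t ht
            simp only [Finset.mem_filter, Finset.mem_Icc] at ht ⊢
            have := (h.chain ht.1 ht.2 hil).2
            omega
          have := Finset.card_le_card hsub
          simp [Nat.card_Icc] at this
          omega
    unfold conj
    rw [hset, ncard_Icc]
    omega
  · push_neg at hil
    rw [mk_out hil]
    apply ncard_eq_card
    intro j
    simp only [Set.mem_setOf_eq, Finset.mem_filter, Finset.mem_Icc]
    constructor
    · rintro ⟨hj1, hji⟩
      by_cases hjl : j ≤ l
      · rw [mk_in hj1 hjl] at hji
        exact ⟨⟨hj1, hjl⟩, hji⟩
      · push_neg at hjl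
        have := mk_out_le (a := a) (b := b) hjl
        omega
    · rintro ⟨⟨hj1, hjl⟩, hja⟩
      exact ⟨hj1, by rw [mk_in hj1 hjl]; exact hja⟩

lemma durfee_mk (l : ℕ) (a b : ℕ → ℕ) : durfee (mk l a b) = l := by
  have hub : ∀ d ∈ {d : ℕ | d ≤ mk l a b d}, d ≤ l := by
    intro d hd
    simp only [Set.mem_setOf_eq] at hd
    by_contra hc
    have := mk_out_le (a := a) (b := b) (by omega : l < d)
    omega
  have hmem : l ∈ {d : ℕ | d ≤ mk l a b d} := by
    simp only [Set.mem_setOf_eq]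
    rcases Nat.eq_zero_or_pos l with h0 | h1
    · simp [h0, mk_zero]
    · rw [mk_in h1 le_rfl]; omega
  exact le_antisymm (csSup_le ⟨l, hmem⟩ hub) (le_csSup ⟨l, hub⟩ hmem)

lemma gauss (l : ℕ) : 2 * ∑ t ∈ Finset.Icc 1 l, t = l * l + l := by
  induction l with
  | zero => simp
  | succ l ih =>
    rw [← Finset.Ico_add_one_right_eq_Icc] at ih ⊢
    rw [Finset.sum_Ico_succ_top (by omega)]
    have h2 : (l + 1) * (l + 1) = l * l + 2 * l + 1 := by ring
    omega

lemma mk_vanish {l : ℕ} (a b : ℕ → ℕ) (h : Good l a b) {j : ℕ} (hj : l + b 1 + 2 ≤ j) :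
    mk l a b j = 0 := by
  rw [mk_out (by omega)]
  convert Finset.card_empty
  rw [Finset.filter_eq_empty_iff]
  intro t ht
  simp only [Finset.mem_Icc] at ht
  have := (h.chain (i := 1) (j := t) le_rfl ht.1 ht.2).2
  omega

lemma size_mk {l : ℕ} {a b : ℕ → ℕ} (h : Good l a b) :
    size (mk l a b) = ∑ i ∈ Finset.Icc 1 l, (a i + b i + 1) := by
  classical
  set N := l + b 1 + 2 with hN
  have h1 : size (mk l a b) = ∑ j ∈ Finset.range N, mk l a b j := by
    apply tsum_eq_sum
    intro j hj
    simp only [Finset.mem_range, not_lt] at hj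
    exact mk_vanish a b h hj
  rw [h1, Finset.range_eq_Ico,
    ← Finset.sum_Ico_consecutive _ (by omega : 0 ≤ l + 1) (by omega : l + 1 ≤ N),
    ← Finset.sum_Ico_consecutive _ (by omega : (0:ℕ) ≤ 1) (by omega : 1 ≤ l + 1)]
  have e0 : ∑ j ∈ Finset.Ico 0 1, mk l a b j = 0 := by simp [mk_zero]
  have e1 : ∑ j ∈ Finset.Ico 1 (l+1), mk l a b j = ∑ j ∈ Finset.Icc 1 l, (a j + j) := by
    rw [Finset.Ico_add_one_right_eq_Icc]
    apply Finset.sum_congr rfl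
    intro j hj
    simp only [Finset.mem_Icc] at hj
    exact mk_in hj.1 hj.2
  have e2 : ∑ j ∈ Finset.Ico (l+1) N, mk l a b j
      = ∑ t ∈ Finset.Icc 1 l, (b t + t - l) := by
    have : ∀ j ∈ Finset.Ico (l+1) N, mk l a b j
        = ∑ t ∈ Finset.Icc 1 l, (if j ≤ b t + t then 1 else 0) := by
      intro j hj
      simp only [Finset.mem_Ico] at hj
      rw [mk_out (by omega)]
      rw [Finset.card_filter]
    rw [Finset.sum_congr rfl this, Finset.sum_comm]
    apply Finset.sum_congr rfl
    intro t ht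
    simp only [Finset.mem_Icc] at ht
    have hb1 : b t + t ≤ b 1 + 1 := (h.chain le_rfl ht.1 ht.2).2
    have hbl : l ≤ b t + t := by
      have := (h.chain ht.1 ht.2 le_rfl).2
      omega
    rw [← Finset.card_filter]
    have : (Finset.Ico (l+1) N).filter (fun j => j ≤ b t + t) = Finset.Ico (l+1) (b t + t + 1) := by
      ext j
      simp only [Finset.mem_filter, Finset.mem_Ico]
      omega
    rw [this, Nat.card_Ico]
    omega
  rw [e0, e1, e2]
  have hsa : ∑ j ∈ Finset.Icc 1 l, (a j + j) = (∑ j ∈ Finset.Icc 1 l, a j) + ∑ j ∈ Finset.Icc 1 l, j :=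
    Finset.sum_add_distrib
  have hsb : ∑ t ∈ Finset.Icc 1 l, (b t + t - l) + ∑ t ∈ Finset.Icc 1 l, l
      = (∑ t ∈ Finset.Icc 1 l, b t) + ∑ t ∈ Finset.Icc 1 l, t := by
    rw [← Finset.sum_add_distrib, ← Finset.sum_add_distrib]
    apply Finset.sum_congr rfl
    intro t ht
    simp only [Finset.mem_Icc] at ht
    have hbl : l ≤ b t + t := by
      have := (h.chain ht.1 ht.2 le_rfl).2
      omega
    omega
  have hsc : ∑ i ∈ Finset.Icc 1 l, (a i + b i + 1)
      = (∑ j ∈ Finset.Icc 1 l, a j) + (∑ t ∈ Finset.Icc 1 l, b t) + l := by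
    rw [Finset.sum_add_distrib, Finset.sum_add_distrib]
    simp [Nat.card_Icc]
  have hconst : ∑ _t ∈ Finset.Icc 1 l, l = l * l := by
    simp [Nat.card_Icc]
  have hg := gauss l
  omega



noncomputable def armOf (π : ℕ → ℕ) (i : ℕ) : ℕ := π i - i
noncomputable def legOf (π : ℕ → ℕ) (i : ℕ) : ℕ := conj π i - i

section Recon
variable {π : ℕ → ℕ}

lemma conj_ge_diag (hπ : IsPartition π) {i : ℕ} (h1 : 1 ≤ i) (h2 : i ≤ durfee π) :
    durfee π ≤ conj π i := by
  rw [conj_ge_iff hπ h1 (by omega)]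
  have := durfee_mem hπ
  omega

lemma conj_anti (hπ : IsPartition π) {i : ℕ} (h1 : 1 ≤ i) :
    conj π (i + 1) ≤ conj π i := by
  rcases Nat.eq_zero_or_pos (conj π (i+1)) with h0 | hp
  · omega
  · have h2 := (conj_ge_iff hπ (by omega : 1 ≤ i + 1) hp).mp le_rfl
    exact (conj_ge_iff hπ h1 hp).mpr (by omega)

lemma good_recon (hπ : IsPartition π) : Good (durfee π) (armOf π) (legOf π) := by
  intro i h1 h2
  have hd1 := part_ge_on_diag hπ h1 (by omega)
  have hd2 := part_ge_on_diag hπ (by omega) h2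
  have hc1 := conj_ge_diag hπ h1 (by omega)
  have hc2 := conj_ge_diag hπ (by omega) h2
  have hm := hπ.2.1 i (i+1) h1 (by omega)
  have hca := conj_anti hπ h1
  unfold armOf legOf
  omega

lemma recon (hπ : IsPartition π) : π = mk (durfee π) (armOf π) (legOf π) := by
  funext i
  rcases Nat.eq_zero_or_pos i with h0 | h1
  · rw [h0, hπ.1, mk_zero]
  by_cases h2 : i ≤ durfee π
  · rw [mk_in h1 h2]
    have := part_ge_on_diag hπ h1 h2
    unfold armOf
    omega
  · push_neg at h2
    rw [mk_out h2]
    have hpid : π i ≤ durfee π := by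
      have hlt := part_lt_of_durfee_lt hπ (i := durfee π + 1) (by omega)
      have := hπ.2.1 (durfee π + 1) i (by omega) (by omega)
      omega
    have hfe : (Finset.Icc 1 (durfee π)).filter (fun j => i ≤ legOf π j + j)
        = Finset.Icc 1 (π i) := by
      ext j
      simp only [Finset.mem_filter, Finset.mem_Icc]
      constructor
      · rintro ⟨⟨hj1, hjd⟩, hleg⟩
        have hcj := conj_ge_diag hπ hj1 hjd
        have hcc : i ≤ conj π j := by unfold legOf at hleg; omega
        have := (conj_ge_iff hπ hj1 h1).mp hcc
        exact ⟨hj1, this⟩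
      · rintro ⟨hj1, hjp⟩
        have hcc : i ≤ conj π j := (conj_ge_iff hπ hj1 h1).mpr hjp
        have hjd : j ≤ durfee π := by omega
        have hcj := conj_ge_diag hπ hj1 hjd
        refine ⟨⟨hj1, hjd⟩, ?_⟩
        unfold legOf
        omega
    rw [hfe, Nat.card_Icc]
    omega

lemma angPart_diag (hπ : IsPartition π) {i : ℕ} (h1 : 1 ≤ i) (h2 : i ≤ durfee π) :
    angPart π i = armOf π i + legOf π i + 1 := by
  have hp := part_ge_on_diag hπ h1 h2
  have hc := conj_ge_diag hπ h1 h2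
  unfold angPart armOf legOf
  rw [if_pos ⟨h1, h2⟩]
  omega

lemma rank_diag (hπ : IsPartition π) {i : ℕ} (h1 : 1 ≤ i) (h2 : i ≤ durfee π) :
    rank π i = (armOf π i : ℤ) - legOf π i := by
  have hp := part_ge_on_diag hπ h1 h2
  have hc := conj_ge_diag hπ h1 h2
  unfold rank armOf legOf
  omega

end Recon

section Fwd
variable {π : ℕ → ℕ} {r M n : ℕ}

lemma angPart_out {π : ℕ → ℕ} {i : ℕ} (h : ¬ (1 ≤ i ∧ i ≤ durfee π)) : angPart π i = 0 := by
  unfold angPart; rw [if_neg h]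

lemma colorOf_out {r : ℕ} {π : ℕ → ℕ} {i : ℕ} (h : ¬ (1 ≤ i ∧ i ≤ durfee π)) :
    colorOf r π i = 0 := by
  unfold colorOf; rw [if_neg h]

lemma angPart_isPartition (hπ : IsPartition π) : IsPartition (angPart π) := by
  refine ⟨angPart_out (by omega), ?_, durfee π + 1, fun j hj => angPart_out (by omega)⟩
  intro i j h1 hij
  by_cases hj : j ≤ durfee π
  · have hi : i ≤ durfee π := le_trans hij hj
    rw [angPart_diag hπ h1 hi, angPart_diag hπ (le_trans h1 hij) hj]
    have := (good_recon hπ).chain h1 hij hj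
    omega
  · rw [angPart_out (by omega)]
    omega

lemma len_angPart (hπ : IsPartition π) : len (angPart π) = durfee π := by
  unfold len conj
  rw [ncard_eq_card _ (Finset.Icc 1 (durfee π)) ?_, Nat.card_Icc]
  · omega
  · intro j
    simp only [Set.mem_setOf_eq, Finset.mem_Icc]
    constructor
    · rintro ⟨hj1, hja⟩
      refine ⟨hj1, ?_⟩
      by_contra hc
      rw [angPart_out (by omega)] at hja
      omega
    · rintro ⟨hj1, hjd⟩
      rw [angPart_diag hπ hj1 hjd]
      omega

lemma size_angPart (hπ : IsPartition π) : size (angPart π) = size π := by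
  have h1 : size (angPart π) = ∑ j ∈ Finset.Icc 1 (durfee π), angPart π j := by
    apply tsum_eq_sum
    intro j hj
    simp only [Finset.mem_Icc] at hj
    exact angPart_out (by omega)
  rw [h1]
  conv_rhs => rw [recon hπ]
  rw [size_mk (good_recon hπ)]
  apply Finset.sum_congr rfl
  intro j hj
  simp only [Finset.mem_Icc] at hj
  exact angPart_diag hπ hj.1 hj.2

lemma color_lift (hπ : IsPartition π) {i : ℕ} (h1 : 1 ≤ i) (h2 : i ≤ durfee π)
    (hb : -(r:ℤ) + 2 ≤ rank π i) :
    (angPart π i % 2 = r % 2 → 2 * (colorOf r π i : ℤ) = rank π i + r - 1) ∧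
    (¬ angPart π i % 2 = r % 2 → 2 * (colorOf r π i : ℤ) = rank π i + r) := by
  have hA := angPart_diag hπ h1 h2
  have hR := rank_diag hπ h1 h2
  unfold colorOf
  rw [if_pos ⟨h1, h2⟩]
  constructor
  · intro hpar
    rw [if_pos hpar]
    rw [hA] at hpar
    rw [hR] at hb ⊢
    omega
  · intro hpar
    rw [if_neg hpar]
    rw [hA] at hpar
    rw [hR] at hb ⊢
    omega

end Fwd

lemma mapsTo_fwd {n M r : ℕ} (hr : 0 < r) (hM : 2 * r ≤ M) :
    Set.MapsTo (fun π => (angPart π, colorOf r π)) (Aset n M r) (Cset n M r) := by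
  rintro π ⟨hπ, hsize, hrank⟩
  have hlen := len_angPart hπ
  set d := durfee π with hd
  simp only [Cset, IsColoredPartition, CCond, Set.mem_setOf_eq]
  refine ⟨⟨angPart_isPartition hπ, ?_, ?_, ?_⟩, ?_, ?_, ?_, ?_⟩
  · -- colors in range
    intro i h1 h2
    rw [hlen] at h2
    have hb := hrank i h1 h2
    have hA := angPart_diag hπ h1 h2
    have hR := rank_diag hπ h1 h2
    have hcl := color_lift hπ h1 h2 hb.1
    by_cases hpar : angPart π i % 2 = r % 2
    · have hc := hcl.1 hpar
      rw [hA] at hpar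
      rw [hR] at hc hb
      constructor <;> omega
    · have hc := hcl.2 hpar
      rw [hA] at hpar
      rw [hR] at hc hb
      constructor <;> omega
  · -- color monotone on equal parts (vacuous: strictly decreasing)
    intro i h1 h2 heq
    rw [hlen] at h2
    exfalso
    rw [angPart_diag hπ h1 (by omega), angPart_diag hπ (by omega) h2] at heq
    have := good_recon hπ i h1 (by rw [← hd]; omega)
    omega
  · -- color zero outside
    intro i hi
    apply colorOf_out
    rw [hlen] at hi
    omega
  · -- size
    rw [size_angPart hπ, hsize]
  · -- CCond (i)
    intro i h1 h2
    rw [hlen] at h2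
    have hb := hrank i h1 h2
    have hA := angPart_diag hπ h1 h2
    have hR := rank_diag hπ h1 h2
    have hcl := color_lift hπ h1 h2 hb.1
    by_cases hpar : angPart π i % 2 = r % 2
    · rw [if_pos hpar]
      have hc := hcl.1 hpar
      rw [hR] at hc hb
      rw [hA]
      rcases abs_cases (2 * (colorOf r π i : ℤ) - r + 1) with ⟨he, _⟩ | ⟨he, _⟩ <;>
        rw [he] <;> push_cast <;> omega
    · rw [if_neg hpar]
      have hc := hcl.2 hpar
      rw [hR] at hc hb
      rw [hA]
      rcases abs_cases (2 * (colorOf r π i : ℤ) - r) with ⟨he, _⟩ | ⟨he, _⟩ <;>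
        rw [he] <;> push_cast <;> omega
  · -- CCond (ii)
    intro i h1 h2
    rw [hlen] at h2
    have hb1 := hrank i h1 (by omega)
    have hb2 := hrank (i+1) (by omega) h2
    have hA1 := angPart_diag hπ h1 (by omega : i ≤ d)
    have hA2 := angPart_diag hπ (by omega : 1 ≤ i + 1) h2
    have hR1 := rank_diag hπ h1 (by omega : i ≤ d)
    have hR2 := rank_diag hπ (by omega : 1 ≤ i + 1) h2
    have hcl1 := color_lift hπ h1 (by omega : i ≤ d) hb1.1
    have hcl2 := color_lift hπ (by omega : 1 ≤ i + 1) h2 hb2.1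
    have hg := good_recon hπ i h1 (by rw [← hd]; omega)
    by_cases p1 : angPart π i % 2 = r % 2 <;> by_cases p2 : angPart π (i+1) % 2 = r % 2
    · have hc1 := hcl1.1 p1
      have hc2 := hcl2.1 p2
      rw [if_pos (by omega : angPart π i % 2 = angPart π (i+1) % 2)]
      rw [hR1] at hc1; rw [hR2] at hc2
      rw [hA1, hA2]
      rcases abs_cases (2 * ((colorOf r π i : ℤ) - (colorOf r π (i+1) : ℤ))) with ⟨he, _⟩ | ⟨he, _⟩ <;>
        rw [he] <;> push_cast <;> omega
    · have hc1 := hcl1.1 p1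
      have hc2 := hcl2.2 p2
      rw [if_neg (by omega : ¬ angPart π i % 2 = angPart π (i+1) % 2), if_neg p2]
      rw [hR1] at hc1; rw [hR2] at hc2
      rw [hA1, hA2]
      rcases abs_cases (2 * ((colorOf r π i : ℤ) - (colorOf r π (i+1) : ℤ)) + 1) with ⟨he, _⟩ | ⟨he, _⟩ <;>
        rw [he] <;> push_cast <;> omega
    · have hc1 := hcl1.2 p1
      have hc2 := hcl2.1 p2
      rw [if_neg (by omega : ¬ angPart π i % 2 = angPart π (i+1) % 2), if_pos p2]
      rw [hR1] at hc1; rw [hR2] at hc2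
      rw [hA1, hA2]
      rcases abs_cases (2 * ((colorOf r π i : ℤ) - (colorOf r π (i+1) : ℤ)) - 1) with ⟨he, _⟩ | ⟨he, _⟩ <;>
        rw [he] <;> push_cast <;> omega
    · have hc1 := hcl1.2 p1
      have hc2 := hcl2.2 p2
      rw [if_pos (by omega : angPart π i % 2 = angPart π (i+1) % 2)]
      rw [hR1] at hc1; rw [hR2] at hc2
      rw [hA1, hA2]
      rcases abs_cases (2 * ((colorOf r π i : ℤ) - (colorOf r π (i+1) : ℤ))) with ⟨he, _⟩ | ⟨he, _⟩ <;>
        rw [he] <;> push_cast <;> omega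
  · -- CCond (iii)
    intro i h1 h2 hMeven hcval hpar
    rw [hlen] at h2
    have hb := hrank i h1 h2
    have hcl := (color_lift hπ h1 h2 hb.1).1 hpar
    rw [hcval] at hcl
    omega

noncomputable def rho (r : ℕ) (α c : ℕ → ℕ) (i : ℕ) : ℤ :=
  if α i % 2 = r % 2 then 2 * c i - r + 1 else 2 * c i - r

noncomputable def invA (r : ℕ) (α c : ℕ → ℕ) (i : ℕ) : ℕ :=
  (((α i : ℤ) + rho r α c i - 1) / 2).toNat

noncomputable def invB (r : ℕ) (α c : ℕ → ℕ) (i : ℕ) : ℕ :=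
  (((α i : ℤ) - rho r α c i - 1) / 2).toNat

noncomputable def invMap (r : ℕ) (p : (ℕ → ℕ) × (ℕ → ℕ)) : ℕ → ℕ :=
  mk (len p.1) (invA r p.1 p.2) (invB r p.1 p.2)

lemma lift_inv {r M : ℕ} {α c : ℕ → ℕ} {i : ℕ}
    (hcond : if α i % 2 = r % 2 then (α i : ℤ) > |2 * (c i : ℤ) - r + 1|
      else (α i : ℤ) > |2 * (c i : ℤ) - r|) :
    2 * (invA r α c i : ℤ) = (α i : ℤ) + rho r α c i - 1 ∧
    2 * (invB r α c i : ℤ) = (α i : ℤ) - rho r α c i - 1 := by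
  unfold invA invB rho
  by_cases hpar : α i % 2 = r % 2
  · rw [if_pos hpar] at hcond ⊢
    rcases abs_cases (2 * (c i : ℤ) - r + 1) with ⟨he, _⟩ | ⟨he, _⟩ <;> rw [he] at hcond <;>
      constructor <;> omega
  · rw [if_neg hpar] at hcond ⊢
    rcases abs_cases (2 * (c i : ℤ) - r) with ⟨he, _⟩ | ⟨he, _⟩ <;> rw [he] at hcond <;>
      constructor <;> omega

lemma good_inv {r M : ℕ} {α c : ℕ → ℕ} (hC : CCond M r α c) :
    Good (len α) (invA r α c) (invB r α c) := by
  intro i h1 h2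
  have l1 := lift_inv (M := M) (hC.1 i h1 (by omega))
  have l2 := lift_inv (M := M) (hC.1 (i+1) (by omega) h2)
  have hgap := hC.2.1 i h1 h2
  unfold rho at l1 l2
  by_cases p1 : α i % 2 = r % 2 <;> by_cases p2 : α (i+1) % 2 = r % 2
  · rw [if_pos p1] at l1
    rw [if_pos p2] at l2
    rw [if_pos (by omega : α i % 2 = α (i+1) % 2)] at hgap
    rcases abs_cases (2 * ((c i : ℤ) - (c (i+1) : ℤ))) with ⟨he, _⟩ | ⟨he, _⟩ <;>
      rw [he] at hgap <;> constructor <;> omega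
  · rw [if_pos p1] at l1
    rw [if_neg p2] at l2
    rw [if_neg (by omega : ¬ α i % 2 = α (i+1) % 2), if_neg p2] at hgap
    rcases abs_cases (2 * ((c i : ℤ) - (c (i+1) : ℤ)) + 1) with ⟨he, _⟩ | ⟨he, _⟩ <;>
      rw [he] at hgap <;> constructor <;> omega
  · rw [if_neg p1] at l1
    rw [if_pos p2] at l2
    rw [if_neg (by omega : ¬ α i % 2 = α (i+1) % 2), if_pos p2] at hgap
    rcases abs_cases (2 * ((c i : ℤ) - (c (i+1) : ℤ)) - 1) with ⟨he, _⟩ | ⟨he, _⟩ <;>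
      rw [he] at hgap <;> constructor <;> omega
  · rw [if_neg p1] at l1
    rw [if_neg p2] at l2
    rw [if_pos (by omega : α i % 2 = α (i+1) % 2)] at hgap
    rcases abs_cases (2 * ((c i : ℤ) - (c (i+1) : ℤ))) with ⟨he, _⟩ | ⟨he, _⟩ <;>
      rw [he] at hgap <;> constructor <;> omega

lemma size_part {α : ℕ → ℕ} (hα : IsPartition α) :
    size α = ∑ j ∈ Finset.Icc 1 (len α), α j := by
  apply tsum_eq_sum
  intro j hj
  simp only [Finset.mem_Icc] at hj
  rcases Nat.eq_zero_or_pos j with h0 | h1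
  · rw [h0, hα.1]
  · exact part_eq_zero_of_len_lt hα (by omega)

lemma mapsTo_inv {n M r : ℕ} (hr : 0 < r) (hM : 2 * r ≤ M) :
    Set.MapsTo (invMap r) (Cset n M r) (Aset n M r) := by
  rintro ⟨α, c⟩ hp
  simp only [Cset, IsColoredPartition, CCond, Set.mem_setOf_eq] at hp
  obtain ⟨⟨hα, hcol, hmono, hzero⟩, hsize, hC'⟩ := hp
  have hC : CCond M r α c := hC'
  simp only [invMap]
  have hg := good_inv (M := M) hC
  refine ⟨isPartition_mk hg, ?_, ?_⟩
  · -- size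
    rw [size_mk hg]
    rw [size_part hα] at hsize
    rw [← hsize]
    apply Finset.sum_congr rfl
    intro i hi
    simp only [Finset.mem_Icc] at hi
    have l1 := lift_inv (M := M) (hC.1 i hi.1 hi.2)
    omega
  · -- rank bounds
    intro i h1 h2
    rw [durfee_mk] at h2
    have l1 := lift_inv (M := M) (hC.1 i h1 h2)
    have hcb := hcol i h1 h2
    have hrank : rank (mk (len α) (invA r α c) (invB r α c)) i
        = (invA r α c i : ℤ) - invB r α c i := by
      unfold rank
      rw [conj_mk hg h1, mk_in h1 h2, mk_in h1 h2]
      push_cast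
      ring
    rw [hrank]
    unfold rho at l1
    by_cases hpar : α i % 2 = r % 2
    · rw [if_pos hpar] at l1
      have h3 := hC.2.2 i h1 h2
      by_cases hMe : M % 2 = 0
      · have := h3 hMe
        have hne : ¬ c i = M / 2 - 1 := fun hc => (this hc) hpar
        constructor <;> omega
      · constructor <;> omega
    · rw [if_neg hpar] at l1
      constructor <;> omega

lemma leftInv {n M r : ℕ} :
    Set.LeftInvOn (invMap r) (fun π => (angPart π, colorOf r π)) (Aset n M r) := by
  rintro π ⟨hπ, hsize, hrank⟩
  show invMap r (angPart π, colorOf r π) = π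
  simp only [invMap]
  have hlen := len_angPart hπ
  rw [hlen]
  conv_rhs => rw [recon hπ]
  apply mk_congr
  · intro i h1 h2
    have hb := hrank i h1 h2
    have hA := angPart_diag hπ h1 h2
    have hR := rank_diag hπ h1 h2
    have hcl := color_lift hπ h1 h2 hb.1
    unfold invA rho
    by_cases hpar : angPart π i % 2 = r % 2
    · have hc := hcl.1 hpar
      rw [if_pos hpar, hA]
      rw [hR] at hc
      omega
    · have hc := hcl.2 hpar
      rw [if_neg hpar, hA]
      rw [hR] at hc
      omega
  · intro i h1 h2
    have hb := hrank i h1 h2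
    have hA := angPart_diag hπ h1 h2
    have hR := rank_diag hπ h1 h2
    have hcl := color_lift hπ h1 h2 hb.1
    unfold invB rho
    by_cases hpar : angPart π i % 2 = r % 2
    · have hc := hcl.1 hpar
      rw [if_pos hpar, hA]
      rw [hR] at hc
      omega
    · have hc := hcl.2 hpar
      rw [if_neg hpar, hA]
      rw [hR] at hc
      omega

lemma rightInv {n M r : ℕ} :
    Set.LeftInvOn (fun π => (angPart π, colorOf r π)) (invMap r) (Cset n M r) := by
  rintro ⟨α, c⟩ hp
  simp only [Cset, IsColoredPartition, CCond, Set.mem_setOf_eq] at hp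
  obtain ⟨⟨hα, hcol, hmono, hzero⟩, hsize, hC'⟩ := hp
  have hC : CCond M r α c := hC'
  simp only [invMap]
  set l := len α with hl
  set μ := mk l (invA r α c) (invB r α c) with hμ
  have hg : Good l (invA r α c) (invB r α c) := good_inv (M := M) hC
  have hP : IsPartition μ := isPartition_mk hg
  have hd : durfee μ = l := durfee_mk l _ _
  have hpart : angPart μ = α := by
    funext i
    rcases Nat.eq_zero_or_pos i with h0 | h1
    · rw [h0, angPart_out (by omega), hα.1]
    by_cases h2 : i ≤ l
    · have l1 := lift_inv (M := M) (hC.1 i h1 h2)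
      have e1 : μ i = invA r α c i + i := mk_in h1 h2
      have e2 : conj μ i = invB r α c i + i := by
        rw [hμ, conj_mk hg h1, mk_in h1 h2]
      unfold angPart
      rw [if_pos ⟨h1, by rw [hd]; exact h2⟩, e1, e2]
      omega
    · rw [angPart_out (by omega), part_eq_zero_of_len_lt hα (by omega)]
  refine Prod.ext ?_ ?_
  · exact hpart
  · funext i
    by_cases hin : 1 ≤ i ∧ i ≤ l
    · obtain ⟨h1, h2⟩ := hin
      have l1 := lift_inv (M := M) (hC.1 i h1 h2)
      have hrank : rank μ i = (invA r α c i : ℤ) - invB r α c i := by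
        unfold rank
        rw [hμ, conj_mk hg h1, mk_in h1 h2, mk_in h1 h2]
        push_cast
        ring
      show colorOf r μ i = c i
      unfold colorOf
      rw [if_pos ⟨h1, by rw [hd]; exact h2⟩, hpart, hrank]
      unfold rho at l1
      by_cases hpar : α i % 2 = r % 2
      · rw [if_pos hpar]
        rw [if_pos hpar] at l1
        omega
      · rw [if_neg hpar]
        rw [if_neg hpar] at l1
        omega
    · show colorOf r μ i = c i
      rw [colorOf_out (by rw [hd]; omega), hzero i (by omega)]

end StmtAux

theorem stmt9 (n M r : ℕ) (hr : 0 < r) (hM : 2 * r ≤ M) :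
    Set.BijOn (fun π => (angPart π, colorOf r π)) (Aset n M r) (Cset n M r) ∧
    (Aset n M r).ncard = (Cset n M r).ncard := by
  have hbij : Set.BijOn (fun π => (angPart π, colorOf r π)) (Aset n M r) (Cset n M r) :=
    Set.InvOn.bijOn ⟨StmtAux.leftInv, StmtAux.rightInv⟩
      (StmtAux.mapsTo_fwd hr hM) (StmtAux.mapsTo_inv hr hM)
  exact ⟨hbij, by rw [← hbij.image_eq, Set.ncard_image_of_injOn hbij.injOn]⟩
end

section
/- Let 0 < r ≤ M/2 and k = ⌊M/2⌋. For π ∈ A_n(M,r) with successive ranks r_i, define colors c(i) = (r_i + r − 1)/2 if α_i ≡ r (mod 2) and c(i) = (r_i + r)/2 otherwise, where α_i = π_i + π'_i − 2i + 1. Then 1 ≤ c(i) ≤ k−1 for all i, i.e., the colors lie in {1,…,k−1}. -/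
theorem stmt10 (n M r : ℕ) (hr : 0 < r) (hM : 2 * r ≤ M)
    (π : ℕ → ℕ) (hπ : π ∈ Aset n M r) :
    ∀ i, 1 ≤ i → i ≤ durfee π → 1 ≤ colorOf r π i ∧ colorOf r π i ≤ M / 2 - 1 := by
  obtain ⟨⟨hπ0, hmono, N, hN⟩, hsize, hranks⟩ := hπ
  intro i h1 hd
  -- durfee square property
  have hbdd : BddAbove {d : ℕ | d ≤ π d} := by
    refine ⟨N, fun d hdmem => ?_⟩
    by_contra h
    push_neg at h
    have : π d = 0 := hN d (by omega)
    simp only [Set.mem_setOf_eq] at hdmem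
    omega
  have hds : durfee π ≤ π (durfee π) :=
    Nat.sSup_mem ⟨0, by simp [hπ0]⟩ hbdd
  have hid : 1 ≤ durfee π := le_trans h1 hd
  have hπi : i ≤ π i := by
    have := hmono i (durfee π) h1 hd
    omega
  -- conj π i ≥ i
  have hsubIcc : Set.Icc 1 (durfee π) ⊆ {j : ℕ | 1 ≤ j ∧ i ≤ π j} := by
    intro j hj
    simp only [Set.mem_Icc] at hj
    have := hmono j (durfee π) hj.1 hj.2
    exact ⟨hj.1, by omega⟩
  have hfin : {j : ℕ | 1 ≤ j ∧ i ≤ π j}.Finite := by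
    apply (Set.finite_Icc 1 N).subset
    intro j hj
    simp only [Set.mem_setOf_eq] at hj
    simp only [Set.mem_Icc]
    by_contra h
    push_neg at h
    have : π j = 0 := hN j (by omega)
    omega
  have hconj : i ≤ conj π i := by
    have h1' := Set.ncard_le_ncard hsubIcc hfin
    have : (Set.Icc 1 (durfee π)).ncard = durfee π := by
      rw [Set.ncard_eq_toFinset_card' , Set.toFinset_Icc, Nat.card_Icc]
      omega
    unfold conj
    omega
  -- angPart cast
  have hang : (angPart π i : ℤ) = (π i : ℤ) + (conj π i : ℤ) + 1 - 2 * i := by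
    unfold angPart
    rw [if_pos ⟨h1, hd⟩]
    have : 2 * i ≤ π i + conj π i + 1 := by omega
    push_cast [this]
    ring
  have hrk : rank π i = (π i : ℤ) - (conj π i : ℤ) := rfl
  obtain ⟨hlow, hhigh⟩ := hranks i h1 hd
  unfold colorOf
  rw [if_pos ⟨h1, hd⟩]
  split_ifs with hpar
  · constructor <;> omega
  · constructor <;> omega
end

section
/- Let 0 < r ≤ M/2, k = ⌊M/2⌋, and let (α, c) be a (k−1)-color partition in C_n(M,r) with parts α_1 ≥ … ≥ α_l. Define x_i = (−r + 2c(i) + α_i + 2)/2 if α_i ≡ r (mod 2) and x_i = (−r + 2c(i) + α_i + 1)/2 otherwise, and y_i = α_i − x_i + 1. Then x_1 > x_2 > … > x_l ≥ 1 and y_1 > y_2 > … > y_l ≥ 1. -/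
/-- The width of the `i`-th angle of the inverse image of a colored partition. -/
noncomputable def xCoord (r : ℕ) (α c : ℕ → ℕ) (i : ℕ) : ℤ :=
  if α i % 2 = r % 2 then (-(r : ℤ) + 2 * (c i : ℤ) + (α i : ℤ) + 2) / 2
  else (-(r : ℤ) + 2 * (c i : ℤ) + (α i : ℤ) + 1) / 2

/-- The height of the `i`-th angle of the inverse image of a colored partition. -/
noncomputable def yCoord (r : ℕ) (α c : ℕ → ℕ) (i : ℕ) : ℤ :=
  (α i : ℤ) - xCoord r α c i + 1

theorem stmt12 (n M r : ℕ) (hr : 0 < r) (hM : 2 * r ≤ M)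
    (α c : ℕ → ℕ) (h : (α, c) ∈ Cset n M r) :
    (∀ i, 1 ≤ i → i ≤ len α → 1 ≤ xCoord r α c i ∧ 1 ≤ yCoord r α c i) ∧
    (∀ i, 1 ≤ i → i + 1 ≤ len α →
      xCoord r α c (i + 1) < xCoord r α c i ∧ yCoord r α c (i + 1) < yCoord r α c i) := by

  obtain ⟨-, -, h1, h2, -⟩ := h
  dsimp only at h1 h2
  have hx : ∀ i, (if α i % 2 = r % 2 then 2 * xCoord r α c i = -(r : ℤ) + 2 * (c i : ℤ) + (α i : ℤ) + 2
      else 2 * xCoord r α c i = -(r : ℤ) + 2 * (c i : ℤ) + (α i : ℤ) + 1) := by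
    intro i
    simp only [xCoord]
    split
    · next hp => exact Int.mul_ediv_cancel' (by omega)
    · next hp => exact Int.mul_ediv_cancel' (by omega)
  constructor
  · intro i hi hil
    have hc := h1 i hi hil
    have hxi := hx i
    have a1 := le_abs_self (2 * (c i : ℤ) - r + 1)
    have a2 := neg_abs_le (2 * (c i : ℤ) - r + 1)
    have a3 := le_abs_self (2 * (c i : ℤ) - r)
    have a4 := neg_abs_le (2 * (c i : ℤ) - r)
    simp only [yCoord]
    split at hc <;> split at hxi <;> omega
  · intro i hi hil
    have hc := h2 i hi hil
    have hxi := hx i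
    have hxi1 := hx (i + 1)
    have a1 := le_abs_self (2 * ((c i : ℤ) - (c (i + 1) : ℤ)))
    have a2 := neg_abs_le (2 * ((c i : ℤ) - (c (i + 1) : ℤ)))
    have a3 := le_abs_self (2 * ((c i : ℤ) - (c (i + 1) : ℤ)) - 1)
    have a4 := neg_abs_le (2 * ((c i : ℤ) - (c (i + 1) : ℤ)) - 1)
    have a5 := le_abs_self (2 * ((c i : ℤ) - (c (i + 1) : ℤ)) + 1)
    have a6 := neg_abs_le (2 * ((c i : ℤ) - (c (i + 1) : ℤ)) + 1)
    simp only [yCoord]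
    split at hc <;> [skip; split at hc] <;> split at hxi <;> split at hxi1 <;> omega
end

section
/- Let 0 < r ≤ M/2, k = ⌊M/2⌋, and (α, c) ∈ C_n(M,r). With x_i defined by x_i = (−r + 2c(i) + α_i + 2)/2 if α_i ≡ r (mod 2) and x_i = (−r + 2c(i) + α_i + 1)/2 otherwise, and y_i = α_i − x_i + 1, the rank x_i − y_i = 2x_i − α_i − 1 equals −r + 2c(i) + 1 if α_i ≡ r (mod 2) and −r + 2c(i) otherwise; in particular each x_i − y_i lies in the interval [−r+2, M−r−2]. -/
theorem stmt13 (n M r : ℕ) (hr : 0 < r) (hM : 2 * r ≤ M)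
    (α c : ℕ → ℕ) (h : (α, c) ∈ Cset n M r) :
    ∀ i, 1 ≤ i → i ≤ len α →
      xCoord r α c i - yCoord r α c i = 2 * xCoord r α c i - (α i : ℤ) - 1 ∧
      xCoord r α c i - yCoord r α c i =
        (if α i % 2 = r % 2 then -(r : ℤ) + 2 * (c i : ℤ) + 1
         else -(r : ℤ) + 2 * (c i : ℤ)) ∧
      -(r : ℤ) + 2 ≤ xCoord r α c i - yCoord r α c i ∧
      xCoord r α c i - yCoord r α c i ≤ (M : ℤ) - r - 2 := by
  obtain ⟨⟨hpart, hcol, _, _⟩, hsize, hC1, hC2, hC3⟩ := h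
  intro i hi1 hi2
  obtain ⟨hc1, hc2⟩ := hcol i hi1 hi2
  have hiii := hC3 i hi1 hi2
  simp only at hc1 hc2 hiii
  by_cases hpar : α i % 2 = r % 2
  · have hcM : ¬ (M % 2 = 0 ∧ c i = M / 2 - 1) := by
      rintro ⟨h1, h2⟩; exact hiii h1 h2 hpar
    simp only [yCoord, xCoord, hpar, if_true]
    refine ⟨by ring, ?_, ?_, ?_⟩ <;> omega
  · simp only [yCoord, xCoord, hpar, if_false]
    refine ⟨by ring, ?_, ?_, ?_⟩ <;> omega
end

section
/- Let 0 < r ≤ M/2 and k = ⌊M/2⌋, and let π be a partition with first part π_1 ≤ u and number of parts π'_1 ≤ v, with first successive rank r_1 in [−r+2, M−r−2]. Then the first angle part α_1 = π_1 + π'_1 − 1 and its color c(1) (defined as c(1) = (r_1+r−1)/2 if α_1 ≡ r (mod 2) and (r_1+r)/2 otherwise) satisfy (u+v−1) − α_1 ≥ |2c(1) − r + (v−u) + 1/2| − 1/2. -/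
theorem stmt15 (M r u v : ℕ) (hr : 0 < r) (hM : 2 * r ≤ M)
    (π : ℕ → ℕ) (hπ : IsPartition π) (hl : 1 ≤ len π)
    (hu : π 1 ≤ u) (hv : len π ≤ v)
    (hr1 : -(r : ℤ) + 2 ≤ rank π 1 ∧ rank π 1 ≤ (M : ℤ) - r - 2) :
    ((u : ℚ) + (v : ℚ) - 1) - (angPart π 1 : ℚ) ≥
      |2 * (colorOf r π 1 : ℚ) - (r : ℚ) + ((v : ℚ) - (u : ℚ)) + 1/2| - 1/2 := by
  obtain ⟨h0, hmono, N, hN⟩ := hπ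
  have hllen : len π = conj π 1 := rfl
  have hp1 : 1 ≤ π 1 := by
    have hne : {j : ℕ | 1 ≤ j ∧ 1 ≤ π j}.Nonempty := by
      by_contra h
      rw [Set.not_nonempty_iff_eq_empty] at h
      have : conj π 1 = 0 := by rw [conj, h]; simp
      rw [hllen] at hl; omega
    obtain ⟨j, hj1, hj2⟩ := hne
    exact le_trans hj2 (hmono 1 j le_rfl hj1)
  have hl1 : 1 ≤ conj π 1 := by rwa [hllen] at hl
  have hd1 : 1 ≤ durfee π := by
    have hmem : 1 ∈ {d : ℕ | d ≤ π d} := hp1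
    have hbdd : BddAbove {d : ℕ | d ≤ π d} := by
      refine ⟨π 1, fun d hd => ?_⟩
      rcases Nat.eq_zero_or_pos d with h | h
      · omega
      · exact le_trans hd (hmono 1 d le_rfl h)
    exact le_csSup hbdd hmem
  have hang : angPart π 1 = π 1 + conj π 1 - 1 := by
    rw [angPart, if_pos ⟨le_rfl, hd1⟩]; omega
  have hrank : rank π 1 = (π 1 : ℤ) - (conj π 1 : ℤ) := rfl
  have hr1' : -(r : ℤ) + 2 ≤ (π 1 : ℤ) - (conj π 1 : ℤ) := by
    have := hr1.1; rwa [hrank] at this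
  have hc : colorOf r π 1 =
      (if angPart π 1 % 2 = r % 2 then ((rank π 1 + r - 1) / 2).toNat
       else ((rank π 1 + r) / 2).toNat) := by
    rw [colorOf, if_pos ⟨le_rfl, hd1⟩]
  have hangQ : (angPart π 1 : ℚ) = (π 1 : ℚ) + (conj π 1 : ℚ) - 1 := by
    have : (angPart π 1 : ℤ) = (π 1 : ℤ) + (conj π 1 : ℤ) - 1 := by omega
    exact_mod_cast this
  have huQ : (π 1 : ℚ) ≤ u := by exact_mod_cast hu
  have hvQ : (conj π 1 : ℚ) ≤ v := by rw [hllen] at hv; exact_mod_cast hv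
  have hp1Q : (1 : ℚ) ≤ (π 1 : ℚ) := by exact_mod_cast hp1
  have hl1Q : (1 : ℚ) ≤ (conj π 1 : ℚ) := by exact_mod_cast hl1
  by_cases hpar : angPart π 1 % 2 = r % 2
  · have h2c : 2 * (colorOf r π 1 : ℤ) = (π 1 : ℤ) - (conj π 1 : ℤ) + r - 1 := by
      rw [hc, if_pos hpar, hrank]; omega
    have h2cQ : 2 * (colorOf r π 1 : ℚ) = (π 1 : ℚ) - (conj π 1 : ℚ) + r - 1 := by
      exact_mod_cast h2c
    rw [ge_iff_le, sub_le_iff_le_add, abs_le]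
    constructor <;> linarith
  · have h2c : 2 * (colorOf r π 1 : ℤ) = (π 1 : ℤ) - (conj π 1 : ℤ) + r := by
      rw [hc, if_neg hpar, hrank]; omega
    have h2cQ : 2 * (colorOf r π 1 : ℚ) = (π 1 : ℚ) - (conj π 1 : ℚ) + r := by
      exact_mod_cast h2c
    rw [ge_iff_le, sub_le_iff_le_add, abs_le]
    constructor <;> linarith
end
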